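/- Let V be a real inner product space with almost contact metric structure (φ, ξ, η), S symmetric with Sξ = αξ + βU, U ⊥ ξ unit, β ≠ 0. Suppose that for all X ⊥ ξ and all Y ∈ V: ⟨φSX, φSY⟩ξ - ⟨φSX, SφY⟩ξ - β⟨Y, φU⟩SφX - β⟨φSX, Y⟩φU + η(Y)(φS - Sφ)φSX = 0. Then SU = βξ, SφU = 0, and SX = 0 for all X orthogonal to ξ, U, and φU (i.e., the shape operator has the form of a ruled real hypersurface). -/

import Mathlib

open RealInnerProductSpace

/-- Non-Hopf case of Theorem 1.2: the condition `L_{ξ_F}^{(k)}(X,Y) = 0` for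
`X ∈ C` forces the shape operator to be of ruled type:
`SU = βξ`, `SφU = 0` and `SX = 0` on `C_U`. -/
theorem stmt_8 {V : Type*} [NormedAddCommGroup V] [InnerProductSpace ℝ V]
    [FiniteDimensional ℝ V]
    (φ S : V →ₗ[ℝ] V) (ξ U : V) (α β : ℝ)
    (hφ2 : ∀ X : V, φ (φ X) = -X + ⟪X, ξ⟫ • ξ)
    (hξ : ⟪ξ, ξ⟫ = 1)
    (hmetric : ∀ X Y : V, ⟪φ X, φ Y⟫ = ⟪X, Y⟫ - ⟪X, ξ⟫ * ⟪Y, ξ⟫)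
    (hskew : ∀ X Y : V, ⟪φ X, Y⟫ = -⟪X, φ Y⟫)
    (hφξ : φ ξ = 0)
    (hsym : ∀ X Y : V, ⟪S X, Y⟫ = ⟪X, S Y⟫)
    (hSξ : S ξ = α • ξ + β • U)
    (hUξ : ⟪U, ξ⟫ = 0) (hU : ‖U‖ = 1)
    (hβ : β ≠ 0)
    (hmain : ∀ X Y : V, ⟪X, ξ⟫ = 0 →
      ⟪φ (S X), φ (S Y)⟫ • ξ - ⟪φ (S X), S (φ Y)⟫ • ξ
        - (β * ⟪Y, φ U⟫) • S (φ X) - (β * ⟪φ (S X), Y⟫) • φ U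
        + ⟪Y, ξ⟫ • (φ (S (φ (S X))) - S (φ (φ (S X)))) = 0) :
    S U = β • ξ ∧ S (φ U) = 0 ∧
      ∀ X : V, ⟪X, ξ⟫ = 0 → ⟪X, U⟫ = 0 → ⟪X, φ U⟫ = 0 → S X = 0 := by
  have hUU : ⟪U, U⟫ = 1 := by
    rw [real_inner_self_eq_norm_mul_norm, hU]; ring
  have hξU : ⟪ξ, U⟫ = 0 := by rw [real_inner_comm]; exact hUξ
  have hφWξ : ∀ W : V, ⟪φ W, ξ⟫ = 0 := by
    intro W; rw [hskew, hφξ, inner_zero_right]; ring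
  have hφUξ : ⟪φ U, ξ⟫ = 0 := hφWξ U
  have hξφU : ⟪ξ, φ U⟫ = 0 := by rw [real_inner_comm]; exact hφUξ
  have hφUU : ⟪φ U, U⟫ = 0 := by
    have h1 := hskew U U
    have h2 := real_inner_comm (φ U) U
    linarith
  have hUφU : ⟪U, φ U⟫ = 0 := by rw [real_inner_comm]; exact hφUU
  have hφUφU : ⟪φ U, φ U⟫ = 1 := by rw [hmetric, hUξ, hUU]; ring
  have hηS : ∀ X : V, ⟪S X, ξ⟫ = α * ⟪X, ξ⟫ + β * ⟪X, U⟫ := by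
    intro X
    rw [hsym, hSξ, inner_add_right, real_inner_smul_right, real_inner_smul_right]
  -- key representation: S X ∈ span {ξ, U} for X ⊥ ξ
  have hrep : ∀ X : V, ⟪X, ξ⟫ = 0 → S X = (β * ⟪X, U⟫) • ξ + ⟪S X, U⟫ • U := by
    intro X hX
    set c : ℝ := ⟪S (φ X), φ U⟫ with hc
    set v : V := φ (S X) + c • φ U with hvdef
    have hvξ : ⟪v, ξ⟫ = 0 := by
      rw [hvdef, inner_add_left, real_inner_smul_left, hφWξ, hφUξ]; ring
    have hv : ∀ Y : V, ⟪Y, ξ⟫ = 0 → ⟪v, Y⟫ = 0 := by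
      intro Y hY
      have h := hmain X Y hX
      have h2 : ⟪(⟪φ (S X), φ (S Y)⟫ • ξ - ⟪φ (S X), S (φ Y)⟫ • ξ
          - (β * ⟪Y, φ U⟫) • S (φ X) - (β * ⟪φ (S X), Y⟫) • φ U
          + ⟪Y, ξ⟫ • (φ (S (φ (S X))) - S (φ (φ (S X))))), φ U⟫ = 0 := by
        rw [h, inner_zero_left]
      simp only [inner_add_left, inner_sub_left, real_inner_smul_left, hξφU, hY,
        hφUφU] at h2
      have hβ' : β * (⟪Y, φ U⟫ * c + ⟪φ (S X), Y⟫) = 0 := by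
        rw [hc]; ring_nf; ring_nf at h2; linarith
      have h3 := (mul_eq_zero.mp hβ').resolve_left hβ
      rw [hvdef, inner_add_left, real_inner_smul_left]
      have hcomm := real_inner_comm (φ U) Y
      linear_combination h3 - c * hcomm
    have hv0 : v = 0 := inner_self_eq_zero.mp (hv v hvξ)
    have happ : φ (φ (S X)) = (-c) • φ (φ U) := by
      have hφSX : φ (S X) = (-c) • φ U := by
        rw [neg_smul, eq_neg_iff_add_eq_zero]; exact hv0
      rw [hφSX, map_smul]
    rw [hφ2, hφ2, hUξ] at happ
    have hSXξ : ⟪S X, ξ⟫ = β * ⟪X, U⟫ := by rw [hηS, hX]; ring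
    rw [hSXξ] at happ
    have hSX : S X = (β * ⟪X, U⟫) • ξ + (-c) • U := by
      linear_combination (norm := module) -happ
    have hSXU : ⟪S X, U⟫ = -c := by
      rw [hSX, inner_add_left, real_inner_smul_left, real_inner_smul_left, hξU, hUU]
      ring
    rw [hSXU]; exact hSX
  -- S U = β • ξ + c • U with c = ⟪S U, U⟫
  set c : ℝ := ⟪S U, U⟫ with hcdef
  have hSU : S U = β • ξ + c • U := by
    have := hrep U hUξ
    rwa [hUU, mul_one] at this
  have hSUξ : ⟪S U, ξ⟫ = β := by rw [hηS, hUξ, hUU]; ring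
  -- S (φ U) = 0
  have hSφU : S (φ U) = 0 := by
    have h := hrep (φ U) hφUξ
    have h1 : ⟪S (φ U), U⟫ = 0 := by
      rw [hsym, hSU, inner_add_right, real_inner_smul_right, real_inner_smul_right,
        hφUξ, hφUU]
      ring
    rw [h1, hφUU] at h
    simpa using h
  -- c = 0, using the main identity with X = U, Y = ξ
  have hc0 : c = 0 := by
    have h := hmain U ξ hUξ
    have hφSU : φ (S U) = c • φ U := by
      rw [hSU, map_add, map_smul, map_smul, hφξ, smul_zero, zero_add]
    rw [hφSU, hSφU, hφξ, map_zero] at h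
    have hφSξ : φ (S ξ) = β • φ U := by
      rw [hSξ, map_add, map_smul, map_smul, hφξ, smul_zero, zero_add]
    have e1 : φ (S (c • φ U)) = 0 := by
      rw [map_smul, hSφU, smul_zero, map_zero]
    have e2 : S (φ (c • φ U)) = (-c) • (β • ξ + c • U) := by
      have e3 : φ (c • φ U) = (-c) • U := by
        rw [map_smul, hφ2, hUξ, zero_smul, add_zero, smul_neg, ← neg_smul]
      rw [e3, map_smul, hSU]
    rw [e1, e2, hφSξ] at h
    have h2 := congrArg (fun w : V => (inner ℝ w ξ : ℝ)) h
    simp only [inner_add_left, inner_sub_left, real_inner_smul_left,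
      real_inner_smul_right, inner_zero_left, inner_zero_right, smul_zero,
      zero_sub, smul_neg, neg_smul, neg_neg, inner_neg_left, hξ, hξφU, hφUξ,
      hφUφU, hUξ] at h2
    have hcb : c * β = 0 := by ring_nf at h2 ⊢; linarith
    exact (mul_eq_zero.mp hcb).resolve_right hβ
  refine ⟨by rw [hSU, hc0, zero_smul, add_zero], hSφU, ?_⟩
  intro X hXξ hXU hXφU
  have h := hrep X hXξ
  have h1 : ⟪S X, U⟫ = 0 := by
    rw [hsym, hSU, hc0, zero_smul, add_zero, real_inner_smul_right, hXξ, mul_zero]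
  rw [h1, hXU] at h
  simpa using h
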